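/- Let n ≥ 3, let X ∈ Sym₀(P_n) (real symmetric, zero diagonal, X[i][j] ≠ 0 iff |i-j| = 1), let i ∈ {2,...,n-1}, and let Y be the top-left (i-1)×(i-1) principal submatrix of X and Z the bottom-right (n-i)×(n-i) principal submatrix. For λ ∈ ℝ, the matrix obtained from X - λI by deleting row i has rank < n - 1 if and only if λ is a common eigenvalue of Y and Z. -/

import Mathlib

open Finset

lemma sum_fin_window {n : ℕ} (m s : ℕ) (h : s + m ≤ n) (f : Fin n → ℝ)
    (hz : ∀ c : Fin n, c.1 < s ∨ s + m ≤ c.1 → f c = 0) :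
    ∑ c, f c = ∑ b : Fin m, f ⟨s + b.1, by omega⟩ := by
  classical
  set g : ℕ → ℝ := fun c => if hc : c < n then f ⟨c, hc⟩ else 0 with hg
  have h1 : ∑ c, f c = ∑ c ∈ Finset.range n, g c := by
    rw [Finset.sum_range fun c => g c]
    apply Finset.sum_congr rfl
    intro x _
    simp [hg, x.2]
  have h2 : ∑ b : Fin m, f ⟨s + b.1, by omega⟩ = ∑ c ∈ Finset.Ico s (s + m), g c := by
    rw [Finset.sum_Ico_eq_sum_range]
    simp only [Nat.add_sub_cancel_left]
    rw [Finset.sum_range fun c => g (s + c)]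
    apply Finset.sum_congr rfl
    intro x _
    have hx : s + x.1 < n := by omega
    simp [hg, hx]
  rw [h1, h2]
  symm
  apply Finset.sum_subset
  · intro c hc
    simp only [Finset.mem_Ico] at hc
    simp only [Finset.mem_range]
    omega
  · intro c hc hc'
    simp only [Finset.mem_range] at hc
    simp only [Finset.mem_Ico, not_and, not_lt] at hc'
    simp only [hg]
    rw [dif_pos hc]
    refine hz ⟨c, hc⟩ ?_
    show c < s ∨ s + m ≤ c
    omega

lemma subsmul_dot {n : ℕ} (X : Matrix (Fin n) (Fin n) ℝ) (lam : ℝ) (a : Fin n)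
    (V : Fin n → ℝ) :
    ∑ c, (X - lam • 1) a c * V c = (∑ c, X a c * V c) - lam * V a := by
  have : ∀ c : Fin n, (X - lam • 1) a c * V c
      = X a c * V c - lam * ((if a = c then (1:ℝ) else 0) * V c) := by
    intro c
    simp [Matrix.sub_apply, Matrix.smul_apply, Matrix.one_apply, sub_mul, mul_assoc]
  rw [Finset.sum_congr rfl fun c _ => this c, Finset.sum_sub_distrib, ← Finset.mul_sum]
  congr 1
  congr 1
  simp

lemma trid_first {m : ℕ} (T : Matrix (Fin m) (Fin m) ℝ) (lam : ℝ)
    (hz : ∀ a b : Fin m, ¬(a.1 + 1 = b.1 ∨ b.1 + 1 = a.1) → T a b = 0)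
    (hnz : ∀ a b : Fin m, (a.1 + 1 = b.1 ∨ b.1 + 1 = a.1) → T a b ≠ 0)
    (v : Fin m → ℝ) (hv : T.mulVec v = lam • v)
    (h0 : ∀ j : Fin m, j.1 = 0 → v j = 0) : v = 0 := by
  classical
  have key : ∀ t : ℕ, ∀ j : Fin m, j.1 = t → v j = 0 := by
    intro t
    induction t using Nat.strong_induction_on with
    | _ t ih =>
      intro j hj
      match t, ih with
      | 0, _ => exact h0 j hj
      | (s+1), ih =>
        have hs : s < m := by omega
        have hrow := congrFun hv ⟨s, hs⟩
        simp only [Matrix.mulVec, dotProduct, Pi.smul_apply, smul_eq_mul] at hrow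
        have hvs : v ⟨s, hs⟩ = 0 := ih s (by omega) ⟨s, hs⟩ rfl
        have hsingle : ∑ b, T ⟨s, hs⟩ b * v b = T ⟨s, hs⟩ j * v j := by
          apply Finset.sum_eq_single_of_mem j (Finset.mem_univ j)
          intro b _ hb
          rcases lt_or_ge b.1 (s+1) with hb' | hb'
          · rw [ih b.1 (by omega) b rfl, mul_zero]
          · have : b.1 ≠ s + 1 := fun h => hb (Fin.ext (by rw [h, hj]))
            rw [hz ⟨s, hs⟩ b (by simp; omega), zero_mul]
        rw [hsingle, hvs, mul_zero] at hrow
        have hTnz : T ⟨s, hs⟩ j ≠ 0 := hnz _ _ (Or.inl (by simp [hj]))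
        exact (mul_eq_zero.mp hrow).resolve_left hTnz
  funext j
  exact key j.1 j rfl

lemma trid_last {m : ℕ} (T : Matrix (Fin m) (Fin m) ℝ) (lam : ℝ)
    (hz : ∀ a b : Fin m, ¬(a.1 + 1 = b.1 ∨ b.1 + 1 = a.1) → T a b = 0)
    (hnz : ∀ a b : Fin m, (a.1 + 1 = b.1 ∨ b.1 + 1 = a.1) → T a b ≠ 0)
    (v : Fin m → ℝ) (hv : T.mulVec v = lam • v)
    (h0 : ∀ j : Fin m, j.1 + 1 = m → v j = 0) : v = 0 := by
  classical
  have key : ∀ d : ℕ, ∀ j : Fin m, m ≤ j.1 + 1 + d → v j = 0 := by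
    intro d
    induction d with
    | zero =>
      intro j hj
      exact h0 j (by have := j.2; omega)
    | succ d ih =>
      intro j hj
      by_cases hcase : m ≤ j.1 + 1 + d
      · exact ih j hcase
      · have hm : m = j.1 + 2 + d := by omega
        have hs : j.1 + 1 < m := by omega
        have hrow := congrFun hv ⟨j.1 + 1, hs⟩
        simp only [Matrix.mulVec, dotProduct, Pi.smul_apply, smul_eq_mul] at hrow
        have hvs : v ⟨j.1 + 1, hs⟩ = 0 := ih ⟨j.1 + 1, hs⟩ (by show m ≤ j.1+1+1+d; omega)
        have hsingle : ∑ b, T ⟨j.1 + 1, hs⟩ b * v b = T ⟨j.1 + 1, hs⟩ j * v j := by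
          apply Finset.sum_eq_single_of_mem j (Finset.mem_univ j)
          intro b _ hb
          rcases lt_or_ge b.1 j.1 with hb' | hb'
          · rw [hz ⟨j.1 + 1, hs⟩ b (by simp; omega), zero_mul]
          · have : b.1 ≠ j.1 := fun h => hb (Fin.ext h)
            rw [ih b (by omega), mul_zero]
        rw [hsingle, hvs, mul_zero] at hrow
        have hTnz : T ⟨j.1 + 1, hs⟩ j ≠ 0 := hnz _ _ (Or.inr (by simp))
        exact (mul_eq_zero.mp hrow).resolve_left hTnz
  funext j
  exact key m j (by omega)

lemma pairing {m : ℕ} (T : Matrix (Fin m) (Fin m) ℝ) (hsymm : ∀ a b, T a b = T b a)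
    (lam : ℝ) (u x : Fin m → ℝ) (hu : T.mulVec u = lam • u) (r : Fin m) (c : ℝ)
    (hx : T.mulVec x = lam • x + c • (fun b => if b = r then (1:ℝ) else 0)) :
    c * u r = 0 := by
  classical
  have h1 : ∑ a, u a * (T.mulVec x) a = lam * ∑ a, u a * x a := by
    simp only [Matrix.mulVec, dotProduct]
    rw [Finset.mul_sum]
    have : ∀ a, u a * ∑ b, T a b * x b = ∑ b, T a b * u a * x b := by
      intro a; rw [Finset.mul_sum]; apply Finset.sum_congr rfl; intro b _; ring
    rw [Finset.sum_congr rfl fun a _ => this a, Finset.sum_comm]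
    apply Finset.sum_congr rfl
    intro b _
    have : ∑ a, T a b * u a * x b = (∑ a, T b a * u a) * x b := by
      rw [Finset.sum_mul]; apply Finset.sum_congr rfl; intro a _; rw [hsymm a b]
    rw [this]
    have : ∑ a, T b a * u a = lam * u b := by
      have := congrFun hu b
      simpa [Matrix.mulVec, dotProduct] using this
    rw [this]; ring
  have h2 : ∑ a, u a * (T.mulVec x) a = lam * (∑ a, u a * x a) + c * u r := by
    rw [hx]
    simp only [Pi.add_apply, Pi.smul_apply, smul_eq_mul]
    rw [Finset.sum_congr rfl (fun a _ => mul_add (u a) _ _), Finset.sum_add_distrib]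
    congr 1
    · rw [Finset.mul_sum]; apply Finset.sum_congr rfl; intro a _; ring
    · rw [Finset.sum_congr rfl (fun a _ => by ring :
        ∀ a ∈ Finset.univ, u a * (c * if a = r then (1:ℝ) else 0)
          = c * ((if a = r then (1:ℝ) else 0) * u a))]
      rw [← Finset.mul_sum]
      congr 1
      simp
  rw [h1] at h2
  linarith

def delMat (n : ℕ) (X : Matrix (Fin n) (Fin n) ℝ) (i : ℕ) (lam : ℝ) :
    Matrix (Fin (n - 1)) (Fin n) ℝ :=
  Matrix.of fun (r : Fin (n - 1)) (c : Fin n) =>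
    (X - lam • 1) ⟨if r.1 < i - 1 then r.1 else r.1 + 1, by
      have := r.2; split <;> omega⟩ c

def topMat (n i : ℕ) (h : i ≤ n) (X : Matrix (Fin n) (Fin n) ℝ) :
    Matrix (Fin (i - 1)) (Fin (i - 1)) ℝ :=
  Matrix.of fun a b : Fin (i - 1) =>
    X ⟨a.1, by have := a.2; omega⟩ ⟨b.1, by have := b.2; omega⟩

def botMat (n i : ℕ) (X : Matrix (Fin n) (Fin n) ℝ) :
    Matrix (Fin (n - i)) (Fin (n - i)) ℝ :=
  Matrix.of fun a b : Fin (n - i) =>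
    X ⟨i + a.1, Nat.add_lt_of_lt_sub' a.2⟩ ⟨i + b.1, Nat.add_lt_of_lt_sub' b.2⟩

def vtop (n i : ℕ) (h : i ≤ n) (V : Fin n → ℝ) : Fin (i - 1) → ℝ :=
  fun a => V ⟨a.1, by have := a.2; omega⟩

def wbot (n i : ℕ) (V : Fin n → ℝ) : Fin (n - i) → ℝ :=
  fun a => V ⟨i + a.1, Nat.add_lt_of_lt_sub' a.2⟩

lemma kerA_iff (n : ℕ) (X : Matrix (Fin n) (Fin n) ℝ) (i : ℕ) (lam : ℝ)
    (h2 : 2 ≤ i) (h3 : i ≤ n - 1) (hn : 3 ≤ n) (V : Fin n → ℝ) :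
    (delMat n X i lam).mulVec V = 0 ↔
      (∀ j : Fin n, j.1 ≠ i - 1 → ∑ c, X j c * V c = lam * V j) := by
  classical
  set ρ : Fin (n - 1) → Fin n := fun r =>
    ⟨if r.1 < i - 1 then r.1 else r.1 + 1, by have := r.2; split <;> omega⟩ with hρdef
  have hρval : ∀ r : Fin (n-1), (ρ r).1 = if r.1 < i - 1 then r.1 else r.1 + 1 :=
    fun r => rfl
  have hρne : ∀ r : Fin (n-1), (ρ r).1 ≠ i - 1 := by
    intro r
    rw [hρval]
    split <;> omega
  have hρsurj : ∀ j : Fin n, j.1 ≠ i - 1 → ∃ r : Fin (n-1), ρ r = j := by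
    intro j hj
    rcases lt_or_ge j.1 (i-1) with h | h
    · refine ⟨⟨j.1, by omega⟩, Fin.ext ?_⟩
      rw [hρval]
      show (if j.1 < i - 1 then j.1 else j.1 + 1) = j.1
      rw [if_pos h]
    · refine ⟨⟨j.1 - 1, by omega⟩, Fin.ext ?_⟩
      rw [hρval]
      show (if j.1 - 1 < i - 1 then j.1 - 1 else j.1 - 1 + 1) = j.1
      rw [if_neg (by omega)]
      omega
  have hmv : ∀ (r : Fin (n-1)),
      (delMat n X i lam).mulVec V r = (∑ c, X (ρ r) c * V c) - lam * V (ρ r) := by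
    intro r
    show ∑ c, (X - lam • 1) (ρ r) c * V c = _
    exact subsmul_dot X lam (ρ r) V
  constructor
  · intro h j hj
    obtain ⟨r, rfl⟩ := hρsurj j hj
    have := congrFun h r
    rw [hmv] at this
    simp only [Pi.zero_apply] at this
    linarith
  · intro h
    funext r
    rw [hmv]
    simp only [Pi.zero_apply]
    rw [h (ρ r) (hρne r)]
    ring

lemma Yrow (n : ℕ) (X : Matrix (Fin n) (Fin n) ℝ) (i : ℕ)
    (h2 : 2 ≤ i) (h3 : i ≤ n - 1) (hn : 3 ≤ n)
    (hnonedge : ∀ a b : Fin n, ¬(a.1 + 1 = b.1 ∨ b.1 + 1 = a.1) → X a b = 0)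
    (V : Fin n → ℝ) (j : Fin n) (hj : j.1 < i - 1) :
    ∑ c, X j c * V c
      = (∑ b : Fin (i-1), X j ⟨b.1, by have := b.2; omega⟩
            * V ⟨b.1, by have := b.2; omega⟩)
        + X j ⟨i-1, by omega⟩ * V ⟨i-1, by omega⟩ := by
  classical
  have hi1n : i - 1 < n := by omega
  have key : ∀ c : Fin n, X j c * V c
      = (if c.1 = i-1 then 0 else X j c * V c)
        + (if c = (⟨i-1, hi1n⟩ : Fin n) then X j ⟨i-1, hi1n⟩ * V ⟨i-1, hi1n⟩ else 0) := by
    intro c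
    by_cases hc : c = (⟨i-1, hi1n⟩ : Fin n)
    · subst hc
      simp
    · have hc' : c.1 ≠ i-1 := fun h => hc (Fin.ext h)
      rw [if_neg hc', if_neg hc, add_zero]
  rw [Finset.sum_congr rfl fun c _ => key c, Finset.sum_add_distrib]
  congr 1
  · rw [sum_fin_window (i-1) 0 (by omega) _ ?_]
    · apply Finset.sum_congr rfl
      intro b _
      have hb : 0 + b.1 ≠ i - 1 := by have := b.2; omega
      rw [if_neg hb]
      have e1 : (⟨0 + b.1, by have := b.2; omega⟩ : Fin n) = ⟨b.1, by have := b.2; omega⟩ :=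
        Fin.ext (by show 0 + b.1 = b.1; omega)
      rw [e1]
    · intro c hc
      rcases hc with hc | hc
      · omega
      · by_cases hc' : c.1 = i - 1
        · rw [if_pos hc']
        · rw [if_neg hc']
          have : X j c = 0 := by
            apply hnonedge
            show ¬ (j.1 + 1 = c.1 ∨ c.1 + 1 = j.1)
            omega
          rw [this, zero_mul]
  · rw [Finset.sum_ite_eq' Finset.univ]
    simp

lemma Zrow (n : ℕ) (X : Matrix (Fin n) (Fin n) ℝ) (i : ℕ)
    (h2 : 2 ≤ i) (h3 : i ≤ n - 1) (hn : 3 ≤ n)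
    (hnonedge : ∀ a b : Fin n, ¬(a.1 + 1 = b.1 ∨ b.1 + 1 = a.1) → X a b = 0)
    (V : Fin n → ℝ) (j : Fin n) (hj : i ≤ j.1) :
    ∑ c, X j c * V c
      = (∑ b : Fin (n-i), X j ⟨i + b.1, Nat.add_lt_of_lt_sub' b.2⟩
            * V ⟨i + b.1, Nat.add_lt_of_lt_sub' b.2⟩)
        + X j ⟨i-1, by omega⟩ * V ⟨i-1, by omega⟩ := by
  classical
  have hi1n : i - 1 < n := by omega
  have key : ∀ c : Fin n, X j c * V c
      = (if c.1 < i then 0 else X j c * V c)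
        + (if c = (⟨i-1, hi1n⟩ : Fin n) then X j ⟨i-1, hi1n⟩ * V ⟨i-1, hi1n⟩ else 0) := by
    intro c
    by_cases hc : c = (⟨i-1, hi1n⟩ : Fin n)
    · subst hc
      have : (⟨i-1, hi1n⟩ : Fin n).1 < i := by show i - 1 < i; omega
      rw [if_pos this, if_pos rfl, zero_add]
    · have hc' : c.1 ≠ i-1 := fun h => hc (Fin.ext h)
      rw [if_neg hc, add_zero]
      by_cases hlt : c.1 < i
      · rw [if_pos hlt]
        have : X j c = 0 := by
          apply hnonedge
          show ¬ (j.1 + 1 = c.1 ∨ c.1 + 1 = j.1)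
          omega
        rw [this, zero_mul]
      · rw [if_neg hlt]
  rw [Finset.sum_congr rfl fun c _ => key c, Finset.sum_add_distrib]
  congr 1
  · rw [sum_fin_window (n-i) i (by omega) _ ?_]
    · apply Finset.sum_congr rfl
      intro b _
      have hb : ¬ (i + b.1 < i) := by omega
      rw [if_neg hb]
    · intro c hc
      rcases hc with hc | hc
      · rw [if_pos hc]
      · have := c.2; omega
  · rw [Finset.sum_ite_eq' Finset.univ]
    simp

lemma Yeq_core (n : ℕ) (X : Matrix (Fin n) (Fin n) ℝ) (i : ℕ) (lam : ℝ)
    (h2 : 2 ≤ i) (h3 : i ≤ n - 1) (hn : 3 ≤ n)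
    (hnonedge : ∀ a b : Fin n, ¬(a.1 + 1 = b.1 ∨ b.1 + 1 = a.1) → X a b = 0)
    (V : Fin n → ℝ) (hV : (delMat n X i lam).mulVec V = 0) (a : Fin (i-1)) :
    ∑ b : Fin (i-1), X ⟨a.1, by have := a.2; omega⟩ ⟨b.1, by have := b.2; omega⟩
        * V ⟨b.1, by have := b.2; omega⟩
      = lam * V ⟨a.1, by have := a.2; omega⟩
        + (-(X ⟨i-2, by omega⟩ ⟨i-1, by omega⟩ * V ⟨i-1, by omega⟩)) *
          (if a = (⟨i-2, by omega⟩ : Fin (i-1)) then (1:ℝ) else 0) := by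
  classical
  have hi1n : i - 1 < n := by omega
  have hi2n : i - 2 < n := by omega
  have ha : (⟨a.1, by have := a.2; omega⟩ : Fin n).1 ≠ i - 1 := by
    show a.1 ≠ i - 1; have := a.2; omega
  have hrow0 := (kerA_iff n X i lam h2 h3 hn V).mp hV ⟨a.1, by have := a.2; omega⟩ ha
  have hrow : (∑ b : Fin (i-1), X ⟨a.1, by have := a.2; omega⟩ ⟨b.1, by have := b.2; omega⟩
          * V ⟨b.1, by have := b.2; omega⟩)
        + X ⟨a.1, by have := a.2; omega⟩ ⟨i-1, hi1n⟩ * V ⟨i-1, hi1n⟩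
      = lam * V ⟨a.1, by have := a.2; omega⟩ :=
    (Yrow n X i h2 h3 hn hnonedge V ⟨a.1, by have := a.2; omega⟩
      (by show a.1 < i - 1; exact a.2)).symm.trans hrow0
  by_cases hcase : a = (⟨i-2, by omega⟩ : Fin (i-1))
  · rw [if_pos hcase]
    have e1 : (⟨a.1, by have := a.2; omega⟩ : Fin n) = ⟨i-2, hi2n⟩ := by
      apply Fin.ext
      show a.1 = i - 2
      rw [hcase]
    rw [e1] at hrow ⊢
    linarith
  · rw [if_neg hcase]
    have ha2 : a.1 ≠ i - 2 := fun h => hcase (Fin.ext h)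
    have : X (⟨a.1, by have := a.2; omega⟩ : Fin n) ⟨i-1, hi1n⟩ = 0 := by
      apply hnonedge
      show ¬ (a.1 + 1 = i - 1 ∨ (i-1) + 1 = a.1)
      have := a.2; omega
    rw [this, zero_mul] at hrow
    linarith

lemma Zeq_core (n : ℕ) (X : Matrix (Fin n) (Fin n) ℝ) (i : ℕ) (lam : ℝ)
    (h2 : 2 ≤ i) (h3 : i ≤ n - 1) (hn : 3 ≤ n)
    (hnonedge : ∀ a b : Fin n, ¬(a.1 + 1 = b.1 ∨ b.1 + 1 = a.1) → X a b = 0)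
    (V : Fin n → ℝ) (hV : (delMat n X i lam).mulVec V = 0) (a : Fin (n-i)) :
    ∑ b : Fin (n-i), X ⟨i + a.1, Nat.add_lt_of_lt_sub' a.2⟩ ⟨i + b.1, Nat.add_lt_of_lt_sub' b.2⟩
        * V ⟨i + b.1, Nat.add_lt_of_lt_sub' b.2⟩
      = lam * V ⟨i + a.1, Nat.add_lt_of_lt_sub' a.2⟩
        + (-(X ⟨i, by omega⟩ ⟨i-1, by omega⟩ * V ⟨i-1, by omega⟩)) *
          (if a = (⟨0, by omega⟩ : Fin (n-i)) then (1:ℝ) else 0) := by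
  classical
  have hi1n : i - 1 < n := by omega
  have hin : i < n := by omega
  have ha : (⟨i + a.1, Nat.add_lt_of_lt_sub' a.2⟩ : Fin n).1 ≠ i - 1 := by
    show i + a.1 ≠ i - 1; omega
  have hrow0 := (kerA_iff n X i lam h2 h3 hn V).mp hV ⟨i + a.1, Nat.add_lt_of_lt_sub' a.2⟩ ha
  have hrow : (∑ b : Fin (n-i), X ⟨i + a.1, Nat.add_lt_of_lt_sub' a.2⟩ ⟨i + b.1, Nat.add_lt_of_lt_sub' b.2⟩
          * V ⟨i + b.1, Nat.add_lt_of_lt_sub' b.2⟩)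
        + X ⟨i + a.1, Nat.add_lt_of_lt_sub' a.2⟩ ⟨i-1, hi1n⟩ * V ⟨i-1, hi1n⟩
      = lam * V ⟨i + a.1, Nat.add_lt_of_lt_sub' a.2⟩ :=
    (Zrow n X i h2 h3 hn hnonedge V ⟨i + a.1, Nat.add_lt_of_lt_sub' a.2⟩
      (by show i ≤ i + a.1; omega)).symm.trans hrow0
  by_cases hcase : a = (⟨0, by omega⟩ : Fin (n-i))
  · rw [if_pos hcase]
    have e1 : (⟨i + a.1, Nat.add_lt_of_lt_sub' a.2⟩ : Fin n) = ⟨i, hin⟩ := by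
      apply Fin.ext
      show i + a.1 = i
      rw [hcase]
      simp
    rw [e1] at hrow ⊢
    linarith
  · rw [if_neg hcase]
    have ha2 : a.1 ≠ 0 := fun h => hcase (Fin.ext h)
    have : X (⟨i + a.1, Nat.add_lt_of_lt_sub' a.2⟩ : Fin n) ⟨i-1, hi1n⟩ = 0 := by
      apply hnonedge
      show ¬ (i + a.1 + 1 = i - 1 ∨ (i-1) + 1 = i + a.1)
      omega
    rw [this, zero_mul] at hrow
    linarith

lemma dir_easy (n : ℕ) (X : Matrix (Fin n) (Fin n) ℝ) (i : ℕ) (lam : ℝ)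
    (h2 : 2 ≤ i) (h3 : i ≤ n - 1) (hn : 3 ≤ n)
    (hnonedge : ∀ a b : Fin n, ¬(a.1 + 1 = b.1 ∨ b.1 + 1 = a.1) → X a b = 0)
    (v : Fin (i-1) → ℝ) (hv0 : v ≠ 0)
    (hveq : (topMat n i (by omega) X).mulVec v = lam • v)
    (w : Fin (n-i) → ℝ) (hw0 : w ≠ 0)
    (hweq : (botMat n i X).mulVec w = lam • w) :
    2 ≤ Module.finrank ℝ ↥(LinearMap.ker (delMat n X i lam).mulVecLin) := by
  classical
  have hvA : ∀ a : Fin (i-1),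
      (∑ b : Fin (i-1), X ⟨a.1, by have := a.2; omega⟩ ⟨b.1, by have := b.2; omega⟩ * v b)
        = lam * v a := fun a => congrFun hveq a
  have hwA : ∀ a : Fin (n-i),
      (∑ b : Fin (n-i), X ⟨i + a.1, Nat.add_lt_of_lt_sub' a.2⟩ ⟨i + b.1, Nat.add_lt_of_lt_sub' b.2⟩ * w b)
        = lam * w a := fun a => congrFun hweq a
  set Vv : Fin n → ℝ := fun c => if h : c.1 < i - 1 then v ⟨c.1, h⟩ else 0 with hVvdef
  set Ww : Fin n → ℝ := fun c =>
    if h : i ≤ c.1 then w ⟨c.1 - i, by have := c.2; omega⟩ else 0 with hWwdef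
  have hVv_at : ∀ (c : Fin n) (hc : c.1 < i - 1), Vv c = v ⟨c.1, hc⟩ := by
    intro c hc; simp only [hVvdef]; rw [dif_pos hc]
  have hVv0 : ∀ (c : Fin n), ¬ c.1 < i - 1 → Vv c = 0 := by
    intro c hc; simp only [hVvdef]; rw [dif_neg hc]
  have hWw_at : ∀ (c : Fin n) (hc : i ≤ c.1), Ww c = w ⟨c.1 - i, by have := c.2; omega⟩ := by
    intro c hc; simp only [hWwdef]; rw [dif_pos hc]
  have hWw0 : ∀ (c : Fin n), ¬ i ≤ c.1 → Ww c = 0 := by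
    intro c hc; simp only [hWwdef]; rw [dif_neg hc]
  -- Vv is in the kernel
  have hVvk : (delMat n X i lam).mulVec Vv = 0 := by
    rw [kerA_iff n X i lam h2 h3 hn]
    intro j hj
    rcases lt_or_ge j.1 (i-1) with hlt | hge
    · rw [Yrow n X i h2 h3 hn hnonedge Vv j hlt]
      rw [hVv0 ⟨i-1, by omega⟩ (by show ¬ (i-1 < i-1); omega), mul_zero, add_zero]
      have hterm : ∀ b : Fin (i-1),
          X j ⟨b.1, by have := b.2; omega⟩ * Vv ⟨b.1, by have := b.2; omega⟩
            = X j ⟨b.1, by have := b.2; omega⟩ * v b := by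
        intro b
        rw [hVv_at ⟨b.1, by have := b.2; omega⟩ (by show b.1 < i - 1; exact b.2)]
      rw [Finset.sum_congr rfl fun b _ => hterm b]
      rw [hVv_at j hlt]
      have := hvA ⟨j.1, hlt⟩
      convert this using 2
    · have hgi : i ≤ j.1 := by omega
      rw [Zrow n X i h2 h3 hn hnonedge Vv j hgi]
      rw [hVv0 ⟨i-1, by omega⟩ (by show ¬ (i-1 < i-1); omega), mul_zero, add_zero]
      rw [hVv0 j (by omega)]
      have hterm : ∀ b : Fin (n-i),
          X j ⟨i + b.1, Nat.add_lt_of_lt_sub' b.2⟩ * Vv ⟨i + b.1, Nat.add_lt_of_lt_sub' b.2⟩ = 0 := by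
        intro b
        rw [hVv0 ⟨i + b.1, Nat.add_lt_of_lt_sub' b.2⟩ (by show ¬ (i + b.1 < i - 1); omega), mul_zero]
      rw [Finset.sum_congr rfl fun b _ => hterm b]
      simp
  -- Ww is in the kernel
  have hWwk : (delMat n X i lam).mulVec Ww = 0 := by
    rw [kerA_iff n X i lam h2 h3 hn]
    intro j hj
    rcases lt_or_ge j.1 (i-1) with hlt | hge
    · rw [Yrow n X i h2 h3 hn hnonedge Ww j hlt]
      rw [hWw0 ⟨i-1, by omega⟩ (by show ¬ i ≤ i-1; omega), mul_zero, add_zero]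
      rw [hWw0 j (by omega)]
      have hterm : ∀ b : Fin (i-1),
          X j ⟨b.1, by have := b.2; omega⟩ * Ww ⟨b.1, by have := b.2; omega⟩ = 0 := by
        intro b
        rw [hWw0 ⟨b.1, by have := b.2; omega⟩ (by show ¬ i ≤ b.1; have := b.2; omega), mul_zero]
      rw [Finset.sum_congr rfl fun b _ => hterm b]
      simp
    · have hgi : i ≤ j.1 := by omega
      rw [Zrow n X i h2 h3 hn hnonedge Ww j hgi]
      rw [hWw0 ⟨i-1, by omega⟩ (by show ¬ i ≤ i-1; omega), mul_zero, add_zero]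
      have hterm : ∀ b : Fin (n-i),
          X j ⟨i + b.1, Nat.add_lt_of_lt_sub' b.2⟩ * Ww ⟨i + b.1, Nat.add_lt_of_lt_sub' b.2⟩
            = X j ⟨i + b.1, Nat.add_lt_of_lt_sub' b.2⟩ * w b := by
        intro b
        rw [hWw_at ⟨i + b.1, Nat.add_lt_of_lt_sub' b.2⟩ (by show i ≤ i + b.1; omega)]
        have e2 : (⟨(⟨i + b.1, Nat.add_lt_of_lt_sub' b.2⟩ : Fin n).1 - i, by have := b.2; omega⟩ : Fin (n-i)) = b :=
          Fin.ext (by show i + b.1 - i = b.1; omega)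
        rw [e2]
      rw [Finset.sum_congr rfl fun b _ => hterm b]
      rw [hWw_at j hgi]
      have := hwA ⟨j.1 - i, by have := j.2; omega⟩
      have ej : (⟨i + (⟨j.1 - i, by have := j.2; omega⟩ : Fin (n-i)).1, by have := j.2; omega⟩ : Fin n) = j :=
        Fin.ext (by show i + (j.1 - i) = j.1; omega)
      rw [ej] at this
      convert this using 2
  -- nonzero coordinates
  obtain ⟨a0, ha0⟩ : ∃ a, v a ≠ 0 := by
    by_contra h; push_neg at h; exact hv0 (funext h)
  obtain ⟨b0, hb0⟩ : ∃ b, w b ≠ 0 := by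
    by_contra h; push_neg at h; exact hw0 (funext h)
  have ha0n : a0.1 < n := by have := a0.2; omega
  have hb0n : i + b0.1 < n := by have := b0.2; omega
  have hVva : Vv ⟨a0.1, ha0n⟩ ≠ 0 := by
    rw [hVv_at ⟨a0.1, ha0n⟩ (by show a0.1 < i - 1; exact a0.2)]
    have : (⟨(⟨a0.1, ha0n⟩ : Fin n).1, by show a0.1 < i - 1; exact a0.2⟩ : Fin (i-1)) = a0 :=
      Fin.ext rfl
    rw [this]
    exact ha0
  have hWwa : Vv ⟨i + b0.1, hb0n⟩ = 0 :=
    hVv0 _ (by show ¬ (i + b0.1 < i - 1); omega)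
  have hVvb : Ww ⟨a0.1, ha0n⟩ = 0 :=
    hWw0 _ (by show ¬ i ≤ a0.1; have := a0.2; omega)
  have hWwb : Ww ⟨i + b0.1, hb0n⟩ ≠ 0 := by
    rw [hWw_at ⟨i + b0.1, hb0n⟩ (by show i ≤ i + b0.1; omega)]
    have : (⟨(⟨i + b0.1, hb0n⟩ : Fin n).1 - i, by have := b0.2; omega⟩ : Fin (n-i)) = b0 :=
      Fin.ext (by show i + b0.1 - i = b0.1; omega)
    rw [this]
    exact hb0
  -- linear independence
  have hli : LinearIndependent ℝ ![Vv, Ww] := by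
    rw [LinearIndependent.pair_iff]
    intro s t hst
    have e1 := congrFun hst ⟨a0.1, ha0n⟩
    have e2 := congrFun hst ⟨i + b0.1, hb0n⟩
    simp only [Pi.add_apply, Pi.smul_apply, smul_eq_mul, Pi.zero_apply] at e1 e2
    rw [hVvb, hWwa] at *
    constructor
    · rw [hVvb, mul_zero, add_zero] at e1
      exact (mul_eq_zero.mp e1).resolve_right hVva
    · rw [hWwa, mul_zero, zero_add] at e2
      exact (mul_eq_zero.mp e2).resolve_right hWwb
  -- conclude
  have hsub : Submodule.span ℝ {Vv, Ww} ≤ LinearMap.ker (delMat n X i lam).mulVecLin := by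
    rw [Submodule.span_le]
    rintro x hx
    simp only [Set.mem_insert_iff, Set.mem_singleton_iff] at hx
    rcases hx with rfl | rfl
    · exact LinearMap.mem_ker.mpr (by rw [Matrix.mulVecLin_apply]; exact hVvk)
    · exact LinearMap.mem_ker.mpr (by rw [Matrix.mulVecLin_apply]; exact hWwk)
  have hspan : Module.finrank ℝ ↥(Submodule.span ℝ {Vv, Ww}) = 2 := by
    have hr : Set.range ![Vv, Ww] = {Vv, Ww} :=
      Matrix.range_cons_cons_empty Vv Ww ![]
    rw [← hr, finrank_span_eq_card hli]
    simp
  calc 2 = Module.finrank ℝ ↥(Submodule.span ℝ {Vv, Ww}) := hspan.symm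
    _ ≤ _ := Submodule.finrank_mono hsub

lemma dir_hard (n : ℕ) (X : Matrix (Fin n) (Fin n) ℝ) (i : ℕ) (lam : ℝ)
    (h2 : 2 ≤ i) (h3 : i ≤ n - 1) (hn : 3 ≤ n)
    (hsym : X.IsSymm)
    (hedge : ∀ a b : Fin n, (a.1 + 1 = b.1 ∨ b.1 + 1 = a.1) → X a b ≠ 0)
    (hnonedge : ∀ a b : Fin n, ¬(a.1 + 1 = b.1 ∨ b.1 + 1 = a.1) → X a b = 0)
    (hdk : 2 ≤ Module.finrank ℝ ↥(LinearMap.ker (delMat n X i lam).mulVecLin)) :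
    (∃ v : Fin (i-1) → ℝ, v ≠ 0 ∧ (topMat n i (by omega) X).mulVec v = lam • v) ∧
    (∃ w : Fin (n-i) → ℝ, w ≠ 0 ∧ (botMat n i X).mulVec w = lam • w) := by
  classical
  have hi1n : i - 1 < n := by omega
  have hi2n : i - 2 < n := by omega
  have hin : i < n := by omega
  have hi21 : i - 2 < i - 1 := by omega
  have h0ni : 0 < n - i := by omega
  set T := topMat n i (by omega : i ≤ n) X with hT
  set S := botMat n i X with hS
  -- tridiagonal properties
  have hTz : ∀ a b : Fin (i-1), ¬(a.1 + 1 = b.1 ∨ b.1 + 1 = a.1) → T a b = 0 :=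
    fun a b h => hnonedge _ _ (by simpa using h)
  have hTnz : ∀ a b : Fin (i-1), (a.1 + 1 = b.1 ∨ b.1 + 1 = a.1) → T a b ≠ 0 :=
    fun a b h => hedge _ _ (by simpa using h)
  have hTsym : ∀ a b : Fin (i-1), T a b = T b a := fun a b => hsym.apply _ _
  have hSz : ∀ a b : Fin (n-i), ¬(a.1 + 1 = b.1 ∨ b.1 + 1 = a.1) → S a b = 0 := by
    intro a b h
    refine hnonedge _ _ ?_
    show ¬ (i + a.1 + 1 = i + b.1 ∨ i + b.1 + 1 = i + a.1)
    omega
  have hSnz : ∀ a b : Fin (n-i), (a.1 + 1 = b.1 ∨ b.1 + 1 = a.1) → S a b ≠ 0 := by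
    intro a b h
    refine hedge _ _ ?_
    show (i + a.1 + 1 = i + b.1 ∨ i + b.1 + 1 = i + a.1)
    omega
  have hSsym : ∀ a b : Fin (n-i), S a b = S b a := fun a b => hsym.apply _ _
  set K := LinearMap.ker (delMat n X i lam).mulVecLin with hK
  have hmem : ∀ V : Fin n → ℝ, V ∈ K ↔ (delMat n X i lam).mulVec V = 0 := by
    intro V
    rw [hK, LinearMap.mem_ker, Matrix.mulVecLin_apply]
  -- packaged eigen equations
  have hYfull : ∀ V : Fin n → ℝ, (delMat n X i lam).mulVec V = 0 →
      T.mulVec (fun a : Fin (i-1) => V ⟨a.1, by have := a.2; omega⟩)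
        = lam • (fun a : Fin (i-1) => V ⟨a.1, by have := a.2; omega⟩)
          + (-(X ⟨i-2, hi2n⟩ ⟨i-1, hi1n⟩ * V ⟨i-1, hi1n⟩)) •
            (fun b : Fin (i-1) => if b = (⟨i-2, hi21⟩ : Fin (i-1)) then (1:ℝ) else 0) := by
    intro V hV
    funext a
    exact Yeq_core n X i lam h2 h3 hn hnonedge V hV a
  have hZfull : ∀ V : Fin n → ℝ, (delMat n X i lam).mulVec V = 0 →
      S.mulVec (fun a : Fin (n-i) => V ⟨i + a.1, Nat.add_lt_of_lt_sub' a.2⟩)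
        = lam • (fun a : Fin (n-i) => V ⟨i + a.1, Nat.add_lt_of_lt_sub' a.2⟩)
          + (-(X ⟨i, hin⟩ ⟨i-1, hi1n⟩ * V ⟨i-1, hi1n⟩)) •
            (fun b : Fin (n-i) => if b = (⟨0, h0ni⟩ : Fin (n-i)) then (1:ℝ) else 0) := by
    intro V hV
    funext a
    exact Zeq_core n X i lam h2 h3 hn hnonedge V hV a
  have hYclean : ∀ U : Fin n → ℝ, (delMat n X i lam).mulVec U = 0 → U ⟨i-1, hi1n⟩ = 0 →
      T.mulVec (fun a : Fin (i-1) => U ⟨a.1, by have := a.2; omega⟩)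
        = lam • (fun a : Fin (i-1) => U ⟨a.1, by have := a.2; omega⟩) := by
    intro U hU hUz
    have h := hYfull U hU
    rw [hUz, mul_zero, neg_zero, zero_smul, add_zero] at h
    exact h
  have hZclean : ∀ U : Fin n → ℝ, (delMat n X i lam).mulVec U = 0 → U ⟨i-1, hi1n⟩ = 0 →
      S.mulVec (fun a : Fin (n-i) => U ⟨i + a.1, Nat.add_lt_of_lt_sub' a.2⟩)
        = lam • (fun a : Fin (n-i) => U ⟨i + a.1, Nat.add_lt_of_lt_sub' a.2⟩) := by
    intro U hU hUz
    have h := hZfull U hU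
    rw [hUz, mul_zero, neg_zero, zero_smul, add_zero] at h
    exact h
  -- reconstruction of a kernel vector from its pieces
  have hrecon : ∀ U : Fin n → ℝ,
      (fun a : Fin (i-1) => U ⟨a.1, by have := a.2; omega⟩) = 0 →
      U ⟨i-1, hi1n⟩ = 0 →
      (fun a : Fin (n-i) => U ⟨i + a.1, Nat.add_lt_of_lt_sub' a.2⟩) = 0 → U = 0 := by
    intro U h1 hmid h3'
    funext j
    rcases lt_trichotomy j.1 (i-1) with hlt | heq | hgt
    · have := congrFun h1 ⟨j.1, hlt⟩
      have ej : (⟨(⟨j.1, hlt⟩ : Fin (i-1)).1, by omega⟩ : Fin n) = j := Fin.ext rfl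
      rw [ej] at this
      simpa using this
    · have ej : j = ⟨i-1, hi1n⟩ := Fin.ext heq
      rw [ej]
      exact hmid
    · have := congrFun h3' ⟨j.1 - i, by have := j.2; omega⟩
      have ej : (⟨i + (⟨j.1 - i, by have := j.2; omega⟩ : Fin (n-i)).1, by have := j.2; omega⟩ : Fin n) = j :=
        Fin.ext (by show i + (j.1 - i) = j.1; omega)
      rw [ej] at this
      simpa using this
  -- find a kernel element vanishing at position i-1
  set φ : ↥K →ₗ[ℝ] ℝ := (LinearMap.proj (⟨i-1, hi1n⟩ : Fin n)).comp K.subtype with hφ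
  have hrange : Module.finrank ℝ ↥(LinearMap.range φ) ≤ 1 := by
    have h := Submodule.finrank_le (LinearMap.range φ)
    simpa using h
  have hkerφ : 1 ≤ Module.finrank ℝ ↥(LinearMap.ker φ) := by
    have h := LinearMap.finrank_range_add_finrank_ker φ
    omega
  obtain ⟨y, hy⟩ := (Module.finrank_pos_iff_exists_ne_zero (R := ℝ) (M := ↥(LinearMap.ker φ))).mp
    (show 0 < Module.finrank ℝ ↥(LinearMap.ker φ) by omega)
  set W0 : Fin n → ℝ := ((y.1 : ↥K) : Fin n → ℝ) with hW0
  have hVker : (delMat n X i lam).mulVec W0 = 0 := (hmem _).mp y.1.2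
  have hVzero : W0 ⟨i-1, hi1n⟩ = 0 := LinearMap.mem_ker.mp y.2
  have hVne : W0 ≠ 0 := by
    intro h
    exact hy (Subtype.ext (Subtype.ext h))
  have hYv := hYclean W0 hVker hVzero
  have hZw := hZclean W0 hVker hVzero
  by_cases hvz : (fun a : Fin (i-1) => W0 ⟨a.1, by have := a.2; omega⟩) = 0
  · -- top part vanishes, so bottom part is a nonzero eigenvector of S
    have hwz : (fun a : Fin (n-i) => W0 ⟨i + a.1, Nat.add_lt_of_lt_sub' a.2⟩) ≠ 0 := by
      intro hw
      exact hVne (hrecon W0 hvz hVzero hw)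
    refine ⟨?_, ⟨_, hwz, hZw⟩⟩
    by_contra hnoY
    have hYtriv : ∀ u : Fin (i-1) → ℝ, T.mulVec u = lam • u → u = 0 := by
      intro u hu
      by_contra h0
      exact hnoY ⟨u, h0, hu⟩
    have hwfirst : (fun a : Fin (n-i) => W0 ⟨i + a.1, Nat.add_lt_of_lt_sub' a.2⟩) ⟨0, h0ni⟩ ≠ 0 := by
      intro h0
      apply hwz
      apply trid_first S lam hSz hSnz _ hZw
      intro j hj
      have ej : j = ⟨0, h0ni⟩ := Fin.ext hj
      rw [ej]
      exact h0
    have hK0 : ∀ U : Fin n → ℝ, (delMat n X i lam).mulVec U = 0 → U ⟨i-1, hi1n⟩ = 0 := by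
      intro U hU
      by_contra hUne
      have hpair := pairing S hSsym lam _ _ hZw (⟨0, h0ni⟩ : Fin (n-i)) _ (hZfull U hU)
      have hXe : X ⟨i, hin⟩ ⟨i-1, hi1n⟩ ≠ 0 :=
        hedge _ _ (by show i + 1 = i - 1 ∨ (i-1) + 1 = i; omega)
      rcases mul_eq_zero.mp hpair with h | h
      · rw [neg_eq_zero] at h
        rcases mul_eq_zero.mp h with h' | h'
        · exact hXe h'
        · exact hUne h'
      · exact hwfirst h
    have hinj : Function.Injective ((LinearMap.proj (⟨i, hin⟩ : Fin n)).comp K.subtype) := by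
      rw [← LinearMap.ker_eq_bot]
      rw [Submodule.eq_bot_iff]
      intro x hx
      have hxk := LinearMap.mem_ker.mp hx
      have hU : (delMat n X i lam).mulVec (x : Fin n → ℝ) = 0 := (hmem _).mp x.2
      have hUz : (x : Fin n → ℝ) ⟨i-1, hi1n⟩ = 0 := hK0 _ hU
      have hUyz : (fun a : Fin (i-1) => (x : Fin n → ℝ) ⟨a.1, by have := a.2; omega⟩) = 0 :=
        hYtriv _ (hYclean _ hU hUz)
      have hUwz : (fun a : Fin (n-i) => (x : Fin n → ℝ) ⟨i + a.1, Nat.add_lt_of_lt_sub' a.2⟩) = 0 := by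
        apply trid_first S lam hSz hSnz _ (hZclean _ hU hUz)
        intro j hj
        have ej : j = ⟨0, h0ni⟩ := Fin.ext hj
        rw [ej]
        show (x : Fin n → ℝ) ⟨i + (0:ℕ), by omega⟩ = 0
        have e2 : (⟨i + (0:ℕ), by omega⟩ : Fin n) = ⟨i, hin⟩ := Fin.ext (by show i + 0 = i; omega)
        rw [e2]
        exact hxk
      exact Subtype.ext (hrecon _ hUyz hUz hUwz)
    have hle := LinearMap.finrank_le_finrank_of_injective hinj
    rw [Module.finrank_self] at hle
    omega
  · -- top part is a nonzero eigenvector of T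
    refine ⟨⟨_, hvz, hYv⟩, ?_⟩
    by_contra hnoZ
    have hZtriv : ∀ u : Fin (n-i) → ℝ, S.mulVec u = lam • u → u = 0 := by
      intro u hu
      by_contra h0
      exact hnoZ ⟨u, h0, hu⟩
    have hvlast : (fun a : Fin (i-1) => W0 ⟨a.1, by have := a.2; omega⟩) ⟨i-2, hi21⟩ ≠ 0 := by
      intro h0
      apply hvz
      apply trid_last T lam hTz hTnz _ hYv
      intro j hj
      have ej : j = ⟨i-2, hi21⟩ := Fin.ext (by show j.1 = i - 2; omega)
      rw [ej]
      exact h0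
    have hK0 : ∀ U : Fin n → ℝ, (delMat n X i lam).mulVec U = 0 → U ⟨i-1, hi1n⟩ = 0 := by
      intro U hU
      by_contra hUne
      have hpair := pairing T hTsym lam _ _ hYv (⟨i-2, hi21⟩ : Fin (i-1)) _ (hYfull U hU)
      have hXe : X ⟨i-2, hi2n⟩ ⟨i-1, hi1n⟩ ≠ 0 :=
        hedge _ _ (by show (i-2) + 1 = i - 1 ∨ (i-1) + 1 = i - 2; omega)
      rcases mul_eq_zero.mp hpair with h | h
      · rw [neg_eq_zero] at h
        rcases mul_eq_zero.mp h with h' | h'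
        · exact hXe h'
        · exact hUne h'
      · exact hvlast h
    have hinj : Function.Injective ((LinearMap.proj (⟨i-2, hi2n⟩ : Fin n)).comp K.subtype) := by
      rw [← LinearMap.ker_eq_bot]
      rw [Submodule.eq_bot_iff]
      intro x hx
      have hxk := LinearMap.mem_ker.mp hx
      have hU : (delMat n X i lam).mulVec (x : Fin n → ℝ) = 0 := (hmem _).mp x.2
      have hUz : (x : Fin n → ℝ) ⟨i-1, hi1n⟩ = 0 := hK0 _ hU
      have hUwz : (fun a : Fin (n-i) => (x : Fin n → ℝ) ⟨i + a.1, Nat.add_lt_of_lt_sub' a.2⟩) = 0 :=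
        hZtriv _ (hZclean _ hU hUz)
      have hUyz : (fun a : Fin (i-1) => (x : Fin n → ℝ) ⟨a.1, by have := a.2; omega⟩) = 0 := by
        apply trid_last T lam hTz hTnz _ (hYclean _ hU hUz)
        intro j hj
        have ej : j = ⟨i-2, hi21⟩ := Fin.ext (by show j.1 = i - 2; omega)
        rw [ej]
        show (x : Fin n → ℝ) ⟨i-2, by omega⟩ = 0
        exact hxk
      exact Subtype.ext (hrecon _ hUyz hUz hUwz)
    have hle := LinearMap.finrank_le_finrank_of_injective hinj
    rw [Module.finrank_self] at hle
    omega

lemma rank_iff (n : ℕ) (X : Matrix (Fin n) (Fin n) ℝ) (i : ℕ) (lam : ℝ) (hn : 3 ≤ n) :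
    ((delMat n X i lam).rank < n - 1 ↔
      2 ≤ Module.finrank ℝ ↥(LinearMap.ker (delMat n X i lam).mulVecLin)) := by
  have h1 := LinearMap.finrank_range_add_finrank_ker (delMat n X i lam).mulVecLin
  rw [Module.finrank_fin_fun] at h1
  have h2 : (delMat n X i lam).rank
      = Module.finrank ℝ ↥(LinearMap.range (delMat n X i lam).mulVecLin) := rfl
  omega

/-- Deletion criterion for the path graph: for `X ∈ Sym₀(P_n)` and `2 ≤ i ≤ n-1`,
the matrix obtained from `X - λI` by deleting row `i` has rank `< n-1` iff `λ` is a
common eigenvalue of the top-left `(i-1)×(i-1)` block `Y` and the bottom-right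
`(n-i)×(n-i)` block `Z`. Vertices `1,…,n` are represented by `Fin n`. -/
theorem stmt13 (n : ℕ) (hn : 3 ≤ n) (X : Matrix (Fin n) (Fin n) ℝ)
    (hsym : X.IsSymm)
    (hedge : ∀ a b : Fin n, (a.1 + 1 = b.1 ∨ b.1 + 1 = a.1) → X a b ≠ 0)
    (hnonedge : ∀ a b : Fin n, ¬(a.1 + 1 = b.1 ∨ b.1 + 1 = a.1) → X a b = 0)
    (i : ℕ) (hi1 : 2 ≤ i) (hi2 : i ≤ n - 1) (lam : ℝ) :
    (Matrix.of fun (r : Fin (n - 1)) (c : Fin n) =>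
        (X - lam • 1) ⟨if r.1 < i - 1 then r.1 else r.1 + 1, by
          have := r.2; split <;> omega⟩ c).rank < n - 1
    ↔ ((∃ v : Fin (i - 1) → ℝ, v ≠ 0 ∧
          (Matrix.of fun a b : Fin (i - 1) =>
            X ⟨a.1, by have := a.2; omega⟩ ⟨b.1, by have := b.2; omega⟩).mulVec v
            = lam • v) ∧
       (∃ w : Fin (n - i) → ℝ, w ≠ 0 ∧
          (Matrix.of fun a b : Fin (n - i) =>
            X ⟨i + a.1, by have := a.2; omega⟩ ⟨i + b.1, by have := b.2; omega⟩).mulVec w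
            = lam • w)) := by
  constructor
  · intro h
    have hrank : (delMat n X i lam).rank < n - 1 := h
    have hres := dir_hard n X i lam hi1 hi2 hn hsym hedge hnonedge
      ((rank_iff n X i lam hn).mp hrank)
    exact hres
  · rintro ⟨⟨v, hv0, hveq⟩, ⟨w, hw0, hweq⟩⟩
    have hres := dir_easy n X i lam hi1 hi2 hn hnonedge v hv0 hveq w hw0 hweq
    exact (rank_iff n X i lam hn).mpr hres
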